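/- arXiv:2208.09616 — 4 statements merged into one kernel-verified Lean document; each statement's English description precedes it below -/
import Mathlib

section
/- Let U, Z be Hilbert spaces, a: U×U→ℝ bounded and coercive, b: Z×U→ℝ bounded, d: U×U→ℝ bounded positive semi-definite, e: Z×Z→ℝ bounded and coercive. Then the bilinear form ((u,z),(v,y)) ↦ d(u,v) + e(z,y) is coercive on the kernel K := {(u,z) ∈ U×Z : a(u,q) + b(z,q) = 0 for all q ∈ U}; i.e., there exists γ>0 such that d(u,u) + e(z,z) ≥ γ(‖u‖²_U + ‖z‖²_Z) for all (u,z) ∈ K. -/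
/-- the bilinear form ((u,z),(v,y)) ↦ d(u,v)+e(z,y) is coercive on the
kernel {(u,z) : a(u,q)+b(z,q)=0 ∀q} when a, e are bounded coercive, b bounded, d
positive semi-definite. -/
theorem stmt1
    {U Z : Type*}
    [NormedAddCommGroup U] [InnerProductSpace ℝ U] [CompleteSpace U]
    [NormedAddCommGroup Z] [InnerProductSpace ℝ Z] [CompleteSpace Z]
    (a : U →L[ℝ] U →L[ℝ] ℝ) (b : Z →L[ℝ] U →L[ℝ] ℝ)
    (d : U →L[ℝ] U →L[ℝ] ℝ) (e : Z →L[ℝ] Z →L[ℝ] ℝ)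
    (α ε : ℝ) (hα : 0 < α) (hε : 0 < ε)
    (hacoer : ∀ u : U, α * ‖u‖ ^ 2 ≤ a u u)
    (hecoer : ∀ z : Z, ε * ‖z‖ ^ 2 ≤ e z z)
    (hdpos : ∀ u : U, 0 ≤ d u u) :
    ∃ γ > 0, ∀ (u : U) (z : Z), (∀ q : U, a u q + b z q = 0) →
      γ * (‖u‖ ^ 2 + ‖z‖ ^ 2) ≤ d u u + e z z := by

  set C := ‖b‖ with hC
  have hC0 : 0 ≤ C := norm_nonneg b
  refine ⟨ε / (1 + (C / α) ^ 2), by positivity, ?_⟩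
  intro u z hker
  -- ‖u‖ ≤ (C/α) ‖z‖
  have key : α * ‖u‖ ^ 2 ≤ C * ‖z‖ * ‖u‖ := by
    have h1 : a u u = - b z u := by
      have := hker u; linarith
    have h2 : a u u ≤ C * ‖z‖ * ‖u‖ := by
      rw [h1]
      calc - b z u ≤ |b z u| := neg_le_abs _
        _ ≤ ‖b z‖ * ‖u‖ := (b z).le_opNorm u
        _ ≤ C * ‖z‖ * ‖u‖ := by
            have := b.le_opNorm z
            exact mul_le_mul_of_nonneg_right this (norm_nonneg u)
    exact le_trans (hacoer u) h2
  have hu : ‖u‖ ≤ (C / α) * ‖z‖ := by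
    rcases eq_or_lt_of_le (norm_nonneg u) with h | h
    · rw [← h]; positivity
    · have : α * ‖u‖ ≤ C * ‖z‖ := by
        have := key
        nlinarith
      rw [div_mul_eq_mul_div, le_div_iff₀ hα]
      nlinarith
  have hu2 : ‖u‖ ^ 2 ≤ (C / α) ^ 2 * ‖z‖ ^ 2 := by
    have := mul_self_le_mul_self (norm_nonneg u) hu
    nlinarith [norm_nonneg z, norm_nonneg u]
  have hbound : ‖u‖ ^ 2 + ‖z‖ ^ 2 ≤ (1 + (C / α) ^ 2) * ‖z‖ ^ 2 := by nlinarith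
  have hden : (0:ℝ) < 1 + (C / α) ^ 2 := by positivity
  have : ε / (1 + (C / α) ^ 2) * (‖u‖ ^ 2 + ‖z‖ ^ 2) ≤ ε * ‖z‖ ^ 2 := by
    rw [div_mul_eq_mul_div, div_le_iff₀ hden]
    nlinarith [hε.le]
  have := le_trans this (hecoer z)
  have hd := hdpos u
  linarith
end

section
/- Let U, Z be Hilbert spaces, a: U×U→ℝ bounded coercive, b: Z×U→ℝ bounded, d: U×U→ℝ bounded positive semi-definite, e: Z×Z→ℝ bounded coercive, and f: U→ℝ, g: U×Z→ℝ bounded linear forms. Then there exists a unique (u,z,p) ∈ U×Z×U solving the saddle-point problem: d(u,v) + e(z,y) + a(v,p) + b(y,p) = g(v,y) for all (v,y) ∈ U×Z, and a(u,q) + b(z,q) = f(q) for all q ∈ U. Moreover ‖u‖_U + ‖z‖_Z + ‖p‖_U ≤ C(‖f‖_{U'} + ‖g‖_{(U×Z)'}) with C depending only on the continuity constants of a,b,d,e and the coercivity constants of a,e. -/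
open InnerProductSpace RealInnerProductSpace ContinuousLinearMap

section Helpers

open InnerProductSpace RealInnerProductSpace ContinuousLinearMap

variable {V : Type} [NormedAddCommGroup V] [InnerProductSpace ℝ V] [CompleteSpace V]

/-- Real Riesz representation as a continuous linear map on the dual. -/
noncomputable def rieszR (V : Type) [NormedAddCommGroup V] [InnerProductSpace ℝ V]
    [CompleteSpace V] : (V →L[ℝ] ℝ) →L[ℝ] V where
  toFun ℓ := (InnerProductSpace.toDual ℝ V).symm ℓ
  map_add' x y := by simp
  map_smul' r x := by simp
  cont := (InnerProductSpace.toDual ℝ V).symm.continuous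

lemma rieszR_apply (ℓ : V →L[ℝ] ℝ) (v : V) : ⟪rieszR V ℓ, v⟫_ℝ = ℓ v :=
  InnerProductSpace.toDual_symm_apply

/-- Lax–Milgram solution operator. -/
noncomputable def solnMap {B : V →L[ℝ] V →L[ℝ] ℝ} (hB : IsCoercive B) :
    (V →L[ℝ] ℝ) →L[ℝ] V :=
  (hB.continuousLinearEquivOfBilin.symm : V →L[ℝ] V).comp (rieszR V)

lemma solnMap_apply {B : V →L[ℝ] V →L[ℝ] ℝ} (hB : IsCoercive B) (ℓ : V →L[ℝ] ℝ) (v : V) :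
    B (solnMap hB ℓ) v = ℓ v := by
  have h1 := hB.continuousLinearEquivOfBilin_apply
    (hB.continuousLinearEquivOfBilin.symm (rieszR V ℓ)) v
  rw [ContinuousLinearEquiv.apply_symm_apply] at h1
  have h2 := rieszR_apply (V := V) ℓ v
  rw [h1] at h2
  exact h2

lemma arith_bound (α ε k u z p N : ℝ) (hα : 0 < α) (hε : 0 < ε) (hk : 0 ≤ k)
    (hu : 0 ≤ u) (hz : 0 ≤ z) (hp : 0 ≤ p) (hN : 0 ≤ N)
    (h1 : α * u ≤ N + k * z) (h2 : α * p ≤ N + k * u)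
    (h3 : ε * z ^ 2 ≤ N * (u + z + p)) :
    u + z + p ≤ ((2*α+k)/α^2 + (1 + (α*k+k^2)/α^2) *
      (1 + ((2*α+k)/α^2 + (1 + (α*k+k^2)/α^2))/ε)) * N := by
  set c1 := (2*α+k)/α^2 with hc1def
  set c2 := 1 + (α*k+k^2)/α^2 with hc2def
  set c3 := 1 + (c1+c2)/ε with hc3def
  have hα2 : (0:ℝ) < α^2 := by positivity
  have hc1 : 0 < c1 := by rw [hc1def]; apply div_pos (by linarith) hα2
  have hc2 : 0 < c2 := by
    have : 0 ≤ (α*k+k^2)/α^2 := div_nonneg (by nlinarith) hα2.le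
    rw [hc2def]; linarith
  have hc3 : 1 ≤ c3 := by
    have : 0 ≤ (c1+c2)/ε := div_nonneg (by linarith) hε.le
    rw [hc3def]; linarith
  have key : u + z + p ≤ c1 * N + c2 * z := by
    have hmul : α^2 * (u + z + p) ≤ (2*α+k)*N + (α*k+k^2+α^2)*z := by
      nlinarith [mul_le_mul_of_nonneg_left h2 hα.le, mul_le_mul_of_nonneg_left h1 hk,
        mul_le_mul_of_nonneg_left h1 hα.le]
    have heq : (c1 * N + c2 * z) * α^2 = (2*α+k)*N + (α*k+k^2+α^2)*z := by
      rw [hc1def, hc2def]; field_simp; ring_nf; try exact Or.inl trivial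
    have : (u + z + p) * α^2 ≤ (c1 * N + c2 * z) * α^2 := by
      rw [heq]; linarith [hmul]
    exact le_of_mul_le_mul_right this hα2
  have key2 : z ≤ c3 * N := by
    rcases le_or_gt z N with h | h
    · nlinarith [mul_le_mul_of_nonneg_right hc3 hN]
    · have hz0 : 0 < z := lt_of_le_of_lt hN h
      have step : ε * z * z ≤ ((c1+c2)*N) * z := by
        nlinarith [mul_le_mul_of_nonneg_left key hN,
          mul_le_mul_of_nonneg_left h.le (mul_nonneg hc1.le hN)]
      have hez : ε * z ≤ (c1+c2)*N := le_of_mul_le_mul_right step hz0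
      have hεc3 : ε*(c3*N) = ε*N + (c1+c2)*N := by
        rw [hc3def]; field_simp
      have : ε * z ≤ ε * (c3*N) := by rw [hεc3]; nlinarith
      exact le_of_mul_le_mul_left this hε
  nlinarith [key, mul_le_mul_of_nonneg_left key2 hc2.le]

end Helpers

lemma div_lemma (α : ℝ) (hα : 0 < α) (x R : ℝ) (hR : 0 ≤ R)
    (h : α * x ^ 2 ≤ R * x) (hx : 0 ≤ x) : α * x ≤ R := by
  rcases eq_or_lt_of_le hx with h0 | h0
  · have hx0 : x = 0 := h0.symm
    rw [hx0, mul_zero]; exact hR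
  · have h' : (α * x) * x ≤ R * x := by nlinarith
    exact le_of_mul_le_mul_right h' h0

set_option maxHeartbeats 1000000 in
/-- well-posedness of the saddle-point problem (Brezzi theory): unique
solvability and a stability bound with a constant depending only on the continuity
constants of a,b,d,e and the coercivity constants of a,e. -/
theorem stmt2 (Ca Cb Cd Ce α ε : ℝ) (hα : 0 < α) (hε : 0 < ε) :
    ∃ C > 0, ∀ (U Z : Type)
      [NormedAddCommGroup U] [InnerProductSpace ℝ U] [CompleteSpace U]
      [NormedAddCommGroup Z] [InnerProductSpace ℝ Z] [CompleteSpace Z]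
      (a : U →L[ℝ] U →L[ℝ] ℝ) (b : Z →L[ℝ] U →L[ℝ] ℝ)
      (d : U →L[ℝ] U →L[ℝ] ℝ) (e : Z →L[ℝ] Z →L[ℝ] ℝ)
      (f : U →L[ℝ] ℝ) (g : U × Z →L[ℝ] ℝ),
      (∀ u v : U, |a u v| ≤ Ca * ‖u‖ * ‖v‖) →
      (∀ (z : Z) (v : U), |b z v| ≤ Cb * ‖z‖ * ‖v‖) →
      (∀ u v : U, |d u v| ≤ Cd * ‖u‖ * ‖v‖) →
      (∀ z y : Z, |e z y| ≤ Ce * ‖z‖ * ‖y‖) →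
      (∀ u : U, α * ‖u‖ ^ 2 ≤ a u u) →
      (∀ z : Z, ε * ‖z‖ ^ 2 ≤ e z z) →
      (∀ u : U, 0 ≤ d u u) →
      (∃! w : U × Z × U,
        (∀ (v : U) (y : Z),
          d w.1 v + e w.2.1 y + a v w.2.2 + b y w.2.2 = g (v, y)) ∧
        (∀ q : U, a w.1 q + b w.2.1 q = f q)) ∧
      (∀ w : U × Z × U,
        ((∀ (v : U) (y : Z),
          d w.1 v + e w.2.1 y + a v w.2.2 + b y w.2.2 = g (v, y)) ∧
         (∀ q : U, a w.1 q + b w.2.1 q = f q)) →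
        ‖w.1‖ + ‖w.2.1‖ + ‖w.2.2‖ ≤ C * (‖f‖ + ‖g‖)) := by
  set k := max (max Cb Cd) 0 with hkdef
  have hk : (0:ℝ) ≤ k := le_max_right _ _
  have hkb : Cb ≤ k := le_trans (le_max_left _ _) (le_max_left _ _)
  have hkd : Cd ≤ k := le_trans (le_max_right _ _) (le_max_left _ _)
  set C := (2*α+k)/α^2 + (1 + (α*k+k^2)/α^2) *
      (1 + ((2*α+k)/α^2 + (1 + (α*k+k^2)/α^2))/ε) with hCdef
  have hα2 : (0:ℝ) < α^2 := by positivity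
  have hC1 : 0 < (2*α+k)/α^2 := div_pos (by linarith) hα2
  have hC2 : 0 < 1 + (α*k+k^2)/α^2 := by
    have : 0 ≤ (α*k+k^2)/α^2 := div_nonneg (by nlinarith) hα2.le
    linarith
  have hC3 : 0 < 1 + ((2*α+k)/α^2 + (1 + (α*k+k^2)/α^2))/ε := by
    have : 0 ≤ ((2*α+k)/α^2 + (1 + (α*k+k^2)/α^2))/ε := div_nonneg (by linarith) hε.le
    linarith
  have hC : 0 < C := by rw [hCdef]; nlinarith [mul_pos hC2 hC3]
  refine ⟨C, hC, ?_⟩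
  intro U Z _ _ _ _ _ _ a b d e f g hba hbb hbd hbe hca hce hdpos
  -- stability, for arbitrary right-hand sides
  have stab : ∀ (f : U →L[ℝ] ℝ) (g : U × Z →L[ℝ] ℝ) (u : U) (z : Z) (p : U),
      (∀ (v : U) (y : Z), d u v + e z y + a v p + b y p = g (v, y)) →
      (∀ q : U, a u q + b z q = f q) →
      ‖u‖ + ‖z‖ + ‖p‖ ≤ C * (‖f‖ + ‖g‖) := by
    intro f g u z p h1 h2
    set N := ‖f‖ + ‖g‖ with hNdef
    have hNf : ‖f‖ ≤ N := by rw [hNdef]; linarith [norm_nonneg g]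
    have hNg : ‖g‖ ≤ N := by rw [hNdef]; linarith [norm_nonneg f]
    have hN : 0 ≤ N := by rw [hNdef]; positivity
    -- inequality (i)
    have hfu : ∀ q : U, f q ≤ ‖f‖ * ‖q‖ := fun q =>
      le_trans (le_abs_self _) (by simpa [Real.norm_eq_abs] using f.le_opNorm q)
    have hi : α * ‖u‖ ≤ ‖f‖ + k * ‖z‖ := by
      have h := hca u
      have heq : a u u = f u - b z u := by have := h2 u; linarith
      have hb' : -(b z u) ≤ k * ‖z‖ * ‖u‖ := by
        have := hbb z u
        nlinarith [neg_le_abs (b z u), mul_nonneg (norm_nonneg z) (norm_nonneg u)]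
      have hsq : α * ‖u‖^2 ≤ (‖f‖ + k * ‖z‖) * ‖u‖ := by
        nlinarith [hfu u]
      exact div_lemma α hα ‖u‖ _ (add_nonneg (norm_nonneg f) (mul_nonneg hk (norm_nonneg z))) hsq (norm_nonneg u)
    -- inequality (ii)
    have hii : α * ‖p‖ ≤ ‖g‖ + k * ‖u‖ := by
      have h := hca p
      have hp0 := h1 p 0
      simp only [map_zero, ContinuousLinearMap.zero_apply, add_zero] at hp0
      -- hp0 : d u p + a p p = g (p, 0)
      have hgp : g (p, 0) ≤ ‖g‖ * ‖p‖ := by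
        have h1' := le_trans (le_abs_self _) (by simpa [Real.norm_eq_abs] using g.le_opNorm (p, (0:Z)))
        have : ‖((p : U), (0:Z))‖ = ‖p‖ := by
          simp [Prod.norm_def, norm_nonneg]
        exact h1'
      have hd' : -(d u p) ≤ k * ‖u‖ * ‖p‖ := by
        have := hbd u p
        nlinarith [neg_le_abs (d u p), mul_nonneg (norm_nonneg u) (norm_nonneg p)]
      have hsq : α * ‖p‖^2 ≤ (‖g‖ + k * ‖u‖) * ‖p‖ := by nlinarith
      exact div_lemma α hα ‖p‖ _ (add_nonneg (norm_nonneg g) (mul_nonneg hk (norm_nonneg u))) hsq (norm_nonneg p)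
    -- inequality (iii)
    have hiii : ε * ‖z‖^2 ≤ N * (‖u‖ + ‖z‖ + ‖p‖) := by
      have h := hce z
      have huz := h1 u z
      have hp2 := h2 p
      -- e z z = g (u,z) - f p - d u u
      have heq : e z z = g (u, z) - f p - d u u := by linarith
      have hguz : g (u, z) ≤ ‖g‖ * (‖u‖ + ‖z‖) := by
        have h1' := le_trans (le_abs_self _) (by simpa [Real.norm_eq_abs] using g.le_opNorm (u, z))
        have hle : ‖((u:U), (z:Z))‖ ≤ ‖u‖ + ‖z‖ := by
          rw [Prod.norm_def]
          exact max_le (by linarith [norm_nonneg z]) (by linarith [norm_nonneg u])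
        nlinarith [norm_nonneg g, mul_le_mul_of_nonneg_left (max_le (by linarith [norm_nonneg z] : ‖u‖ ≤ ‖u‖ + ‖z‖) (by linarith [norm_nonneg u] : ‖z‖ ≤ ‖u‖ + ‖z‖)) (norm_nonneg g)]
      have hfp : f p ≤ ‖f‖ * ‖p‖ := hfu p
      have hfp' : -(f p) ≤ ‖f‖ * ‖p‖ :=
        le_trans (neg_le_abs _) (by simpa [Real.norm_eq_abs] using f.le_opNorm p)
      nlinarith [hdpos u, norm_nonneg u, norm_nonneg z, norm_nonneg p,
        mul_le_mul_of_nonneg_right hNg (by positivity : (0:ℝ) ≤ ‖u‖ + ‖z‖),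
        mul_le_mul_of_nonneg_right hNf (norm_nonneg p)]
    have := arith_bound α ε k ‖u‖ ‖z‖ ‖p‖ N hα hε hk (norm_nonneg u) (norm_nonneg z)
      (norm_nonneg p) hN (by linarith) (by linarith) hiii
    rw [hCdef]
    exact this
  refine ⟨?_, fun w hw => stab f g w.1 w.2.1 w.2.2 hw.1 hw.2⟩
  -- existence
  have haco : IsCoercive a := ⟨α, hα, fun u => by
    rw [mul_assoc, ← pow_two]; exact hca u⟩
  have haflip : IsCoercive a.flip := ⟨α, hα, fun u => by
    rw [ContinuousLinearMap.flip_apply, mul_assoc, ← pow_two]; exact hca u⟩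
  set w' : Z →L[ℝ] U := (solnMap haco).comp b with hw'def
  have hw' : ∀ (z : Z) (v : U), a (w' z) v = b z v := fun z v => solnMap_apply haco (b z) v
  set dw : Z →L[ℝ] Z →L[ℝ] ℝ :=
    ((ContinuousLinearMap.compL ℝ Z U ℝ).flip w').comp (d.comp w') with hdwdef
  have hdw : ∀ z y, dw z y = d (w' z) (w' y) := fun z y => rfl
  set s : Z →L[ℝ] Z →L[ℝ] ℝ := e + dw with hsdef
  have hs : ∀ z y, s z y = e z y + d (w' z) (w' y) := fun z y => by
    rw [hsdef]
    rw [ContinuousLinearMap.add_apply, ContinuousLinearMap.add_apply, hdw]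
  have hsco : IsCoercive s := ⟨ε, hε, fun z => by
    rw [hs z z, mul_assoc, ← pow_two]
    have hh1 := hce z; have hh2 := hdpos (w' z); linarith⟩
  set u0 : U := solnMap haco f with hu0def
  have hu0 : ∀ q, a u0 q = f q := fun q => solnMap_apply haco f q
  set ℓz : Z →L[ℝ] ℝ := (g.comp (ContinuousLinearMap.inr ℝ U Z)) -
      (g.comp ((ContinuousLinearMap.inl ℝ U Z).comp w')) + (d u0).comp w' with hℓzdef
  have hℓz : ∀ y, ℓz y = g (0, y) - g (w' y, 0) + d u0 (w' y) := fun y => by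
    rw [hℓzdef]
    simp only [ContinuousLinearMap.add_apply, ContinuousLinearMap.sub_apply,
      ContinuousLinearMap.comp_apply, ContinuousLinearMap.inl_apply,
      ContinuousLinearMap.inr_apply]
  set z0 : Z := solnMap hsco ℓz with hz0def
  have hz0 : ∀ y, e z0 y + d (w' z0) (w' y) = g (0, y) - g (w' y, 0) + d u0 (w' y) := by
    intro y
    have h := solnMap_apply hsco ℓz y
    rw [hs] at h
    rw [h]
    exact hℓz y
  set u1 : U := u0 - w' z0 with hu1def
  set ℓp : U →L[ℝ] ℝ := g.comp (ContinuousLinearMap.inl ℝ U Z) - d u1 with hℓpdef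
  set p1 : U := solnMap haflip ℓp with hp1def
  have hp1 : ∀ v, a v p1 = g (v, 0) - d u1 v := by
    intro v
    have h := solnMap_apply haflip ℓp v
    rw [ContinuousLinearMap.flip_apply] at h
    rw [h, hℓpdef]
    simp only [ContinuousLinearMap.sub_apply, ContinuousLinearMap.comp_apply,
      ContinuousLinearMap.inl_apply]
  have heq2 : ∀ q, a u1 q + b z0 q = f q := by
    intro q
    have hsplit : a u1 q = a u0 q - a (w' z0) q := by
      rw [hu1def, map_sub, ContinuousLinearMap.sub_apply]
    rw [hsplit, hu0 q, hw' z0 q]; ring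
  have heq1 : ∀ (v : U) (y : Z), d u1 v + e z0 y + a v p1 + b y p1 = g (v, y) := by
    intro v y
    have hbyp : b y p1 = g (w' y, 0) - d u1 (w' y) := by rw [← hw' y p1, hp1 (w' y)]
    have hduw : d u1 (w' y) = d u0 (w' y) - d (w' z0) (w' y) := by
      rw [hu1def, map_sub, ContinuousLinearMap.sub_apply]
    have hgsplit : g (v, y) = g (v, 0) + g (0, y) := by
      rw [← map_add]
      congr 1
      simp
    rw [hp1 v, hbyp, hduw, hgsplit]
    have hz0y := hz0 y
    linarith
  refine ⟨(u1, z0, p1), ⟨heq1, heq2⟩, ?_⟩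
  rintro ⟨w1, w2, w3⟩ ⟨hwa, hwb⟩
  have h1δ : ∀ (v : U) (y : Z), d (w1 - u1) v + e (w2 - z0) y + a v (w3 - p1) +
      b y (w3 - p1) = (0 : U × Z →L[ℝ] ℝ) (v, y) := by
    intro v y
    have ha' := hwa v y
    have hb' := heq1 v y
    simp only [map_sub, ContinuousLinearMap.sub_apply, ContinuousLinearMap.zero_apply]
    linarith
  have h2δ : ∀ q : U, a (w1 - u1) q + b (w2 - z0) q = (0 : U →L[ℝ] ℝ) q := by
    intro q
    have ha' := hwb q
    have hb' := heq2 q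
    simp only [map_sub, ContinuousLinearMap.sub_apply, ContinuousLinearMap.zero_apply]
    linarith
  have hbound := stab 0 0 (w1 - u1) (w2 - z0) (w3 - p1) h1δ h2δ
  simp only [norm_zero, ContinuousLinearMap.opNorm_zero, add_zero, zero_add, mul_zero] at hbound
  have n1 := norm_nonneg (w1 - u1)
  have n2 := norm_nonneg (w2 - z0)
  have n3 := norm_nonneg (w3 - p1)
  have e1 : w1 = u1 := by
    have : ‖w1 - u1‖ = 0 := by linarith
    exact sub_eq_zero.mp (norm_eq_zero.mp this)
  have e2 : w2 = z0 := by
    have : ‖w2 - z0‖ = 0 := by linarith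
    exact sub_eq_zero.mp (norm_eq_zero.mp this)
  have e3 : w3 = p1 := by
    have : ‖w3 - p1‖ = 0 := by linarith
    exact sub_eq_zero.mp (norm_eq_zero.mp this)
  simp only [Prod.mk.injEq]
  exact ⟨e1, e2, e3⟩
end

section
/- Let U, L, W, Z be Hilbert spaces with Z continuously embedded in L; let G ∈ L(U,L) be a linear isomorphism, F ∈ L(U,W), f* ∈ L, w* ∈ W, ρ > 0. Define a(u,v) := ⟨Gu,Gv⟩_L, b(z,v) := −⟨z,Gv⟩_L, d(u,v) := ⟨Fu,Fv⟩_W, e(z,y) := ρ⟨z,y⟩_Z. Then a is bounded symmetric coercive, b is bounded, d is bounded symmetric positive semi-definite, and e is bounded symmetric coercive; hence the associated saddle-point problem has a unique solution (u,z,p) ∈ U×Z×U, and (u,z) is the unique minimizer of J(u,z) := ½‖Fu − w*‖²_W + (ρ/2)‖z‖²_Z subject to Gu = f* + z. -/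
open RealInnerProductSpace

private lemma ipb {E₁ E₂ E₃ : Type*} [NormedAddCommGroup E₁] [InnerProductSpace ℝ E₁]
    [NormedAddCommGroup E₂] [InnerProductSpace ℝ E₂]
    [NormedAddCommGroup E₃] [InnerProductSpace ℝ E₃]
    (A : E₁ →L[ℝ] E₃) (A' : E₂ →L[ℝ] E₃) (u : E₁) (v : E₂) :
    |⟪A u, A' v⟫| ≤ ‖A‖ * ‖A'‖ * ‖u‖ * ‖v‖ := by
  calc |⟪A u, A' v⟫| ≤ ‖A u‖ * ‖A' v‖ := abs_real_inner_le_norm _ _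
  _ ≤ ‖A‖ * ‖A'‖ * ‖u‖ * ‖v‖ := by
      nlinarith [A.le_opNorm u, A'.le_opNorm v, norm_nonneg (A u), norm_nonneg (A' v),
        norm_nonneg u, norm_nonneg v, A.opNorm_nonneg, A'.opNorm_nonneg]


set_option maxHeartbeats 1000000 in
/-- for the optimal control problem constrained by the first-order
system least-squares operator G, the forms a(u,v)=⟨Gu,Gv⟩, b(z,v)=−⟨iz,Gv⟩,
d(u,v)=⟨Fu,Fv⟩, e(z,y)=ρ⟨z,y⟩ have the required properties; the saddle-point problem
has a unique solution (u,z,p), and its first two components form the unique minimizer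
of J(u,z)=½‖Fu−w*‖²+ (ρ/2)‖z‖² subject to Gu = f*+z. -/
theorem stmt12
    {U L W Z : Type*}
    [NormedAddCommGroup U] [InnerProductSpace ℝ U] [CompleteSpace U]
    [NormedAddCommGroup L] [InnerProductSpace ℝ L] [CompleteSpace L]
    [NormedAddCommGroup W] [InnerProductSpace ℝ W] [CompleteSpace W]
    [NormedAddCommGroup Z] [InnerProductSpace ℝ Z] [CompleteSpace Z]
    (i : Z →L[ℝ] L) (hi : Function.Injective i)
    (G : U ≃L[ℝ] L) (F : U →L[ℝ] W) (fstar : L) (wstar : W)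
    (ρ : ℝ) (hρ : 0 < ρ) :
    -- a bounded, symmetric, coercive
    (∃ C : ℝ, ∀ u v : U, |⟪G u, G v⟫| ≤ C * ‖u‖ * ‖v‖) ∧
    (∀ u v : U, ⟪G u, G v⟫ = ⟪G v, G u⟫) ∧
    (∃ α > 0, ∀ u : U, α * ‖u‖ ^ 2 ≤ ⟪G u, G u⟫) ∧
    -- b bounded
    (∃ C : ℝ, ∀ (z : Z) (v : U), |-⟪i z, G v⟫| ≤ C * ‖z‖ * ‖v‖) ∧
    -- d bounded, symmetric, positive semi-definite
    (∃ C : ℝ, ∀ u v : U, |⟪F u, F v⟫| ≤ C * ‖u‖ * ‖v‖) ∧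
    (∀ u v : U, ⟪F u, F v⟫ = ⟪F v, F u⟫) ∧
    (∀ u : U, 0 ≤ ⟪F u, F u⟫) ∧
    -- e bounded, symmetric, coercive
    (∃ C : ℝ, ∀ z y : Z, |ρ * ⟪z, y⟫| ≤ C * ‖z‖ * ‖y‖) ∧
    (∀ z y : Z, ρ * ⟪z, y⟫ = ρ * ⟪y, z⟫) ∧
    (∀ z : Z, ρ * ‖z‖ ^ 2 ≤ ρ * ⟪z, z⟫) ∧
    -- unique solvability of the saddle-point problem
    (∃! w : U × Z × U,
      (∀ (v : U) (y : Z),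
        ⟪F w.1, F v⟫ + ρ * ⟪w.2.1, y⟫ + ⟪G v, G w.2.2⟫ - ⟪i y, G w.2.2⟫
          = ⟪F v, wstar⟫) ∧
      (∀ q : U, ⟪G w.1, G q⟫ - ⟪i w.2.1, G q⟫ = ⟪fstar, G q⟫)) ∧
    -- the first two components uniquely minimize J subject to Gu = f* + z
    (∀ w : U × Z × U,
      ((∀ (v : U) (y : Z),
        ⟪F w.1, F v⟫ + ρ * ⟪w.2.1, y⟫ + ⟪G v, G w.2.2⟫ - ⟪i y, G w.2.2⟫
          = ⟪F v, wstar⟫) ∧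
       (∀ q : U, ⟪G w.1, G q⟫ - ⟪i w.2.1, G q⟫ = ⟪fstar, G q⟫)) →
      (G w.1 = fstar + i w.2.1 ∧
        ∀ (u' : U) (z' : Z), G u' = fstar + i z' →
          ((1 / 2) * ‖F w.1 - wstar‖ ^ 2 + (ρ / 2) * ‖w.2.1‖ ^ 2
              ≤ (1 / 2) * ‖F u' - wstar‖ ^ 2 + (ρ / 2) * ‖z'‖ ^ 2) ∧
          ((1 / 2) * ‖F u' - wstar‖ ^ 2 + (ρ / 2) * ‖z'‖ ^ 2
              = (1 / 2) * ‖F w.1 - wstar‖ ^ 2 + (ρ / 2) * ‖w.2.1‖ ^ 2 →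
            u' = w.1 ∧ z' = w.2.1))) := by
  classical
  have ha1 : ∃ C : ℝ, ∀ u v : U, |⟪G u, G v⟫| ≤ C * ‖u‖ * ‖v‖ :=
    ⟨‖(G : U →L[ℝ] L)‖ * ‖(G : U →L[ℝ] L)‖, fun u v => by
      simpa using ipb (G : U →L[ℝ] L) (G : U →L[ℝ] L) u v⟩
  have ha3 : ∃ α > 0, ∀ u : U, α * ‖u‖ ^ 2 ≤ ⟪G u, G u⟫ := by
    set S : L →L[ℝ] U := (G.symm : L →L[ℝ] U) with hS
    refine ⟨((‖S‖ + 1) ^ 2)⁻¹, by positivity, fun u => ?_⟩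
    have h1 : ‖u‖ ≤ (‖S‖ + 1) * ‖G u‖ := by
      have h2 : ‖u‖ = ‖S (G u)‖ := by rw [hS]; simp
      rw [h2]
      calc ‖S (G u)‖ ≤ ‖S‖ * ‖G u‖ := S.le_opNorm _
      _ ≤ (‖S‖ + 1) * ‖G u‖ := by nlinarith [norm_nonneg (G u : L)]
    rw [real_inner_self_eq_norm_sq]
    rw [inv_mul_le_iff₀ (by positivity)]
    nlinarith [norm_nonneg u, norm_nonneg (G u : L), norm_nonneg S]
  have hb1 : ∃ C : ℝ, ∀ (z : Z) (v : U), |-⟪i z, G v⟫| ≤ C * ‖z‖ * ‖v‖ :=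
    ⟨‖i‖ * ‖(G : U →L[ℝ] L)‖, fun z v => by
      rw [abs_neg]; simpa using ipb i (G : U →L[ℝ] L) z v⟩
  have hd1 : ∃ C : ℝ, ∀ u v : U, |⟪F u, F v⟫| ≤ C * ‖u‖ * ‖v‖ :=
    ⟨‖F‖ * ‖F‖, fun u v => by simpa using ipb F F u v⟩
  have he1 : ∃ C : ℝ, ∀ z y : Z, |ρ * ⟪z, y⟫| ≤ C * ‖z‖ * ‖y‖ := by
    refine ⟨|ρ|, fun z y => ?_⟩
    rw [abs_mul]
    have h1 := abs_real_inner_le_norm z y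
    have h2 := abs_nonneg ρ
    nlinarith [abs_nonneg (⟪z, y⟫ : ℝ)]
  set Gc : U →L[ℝ] L := (G : U →L[ℝ] L) with hGc
  set S : L →L[ℝ] U := (G.symm : L →L[ℝ] U) with hS
  set B : Z →L[ℝ] W := (F.comp S).comp i with hB
  have hBapp : ∀ z : Z, B z = F (G.symm (i z)) := fun z => rfl
  set w0 : W := wstar - F (G.symm fstar) with hw0
  set Bd : W →L[ℝ] Z := ContinuousLinearMap.adjoint B with hBd
  set T : Z →L[ℝ] Z := ρ • ContinuousLinearMap.id ℝ Z + Bd.comp B with hT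
  set cF : Z →L[ℝ] Z →L[ℝ] ℝ := (innerSL ℝ).comp T with hcF
  have hcapp : ∀ z y : Z, cF z y = ρ * ⟪z, y⟫ + ⟪B z, B y⟫ := by
    intro z y
    simp [hcF, hT, hBd, inner_add_left, real_inner_smul_left,
      ContinuousLinearMap.adjoint_inner_left]
    exact Or.inl (innerSL_apply_apply ℝ z y)
  have hcoer : IsCoercive cF := by
    refine ⟨ρ, hρ, fun z => ?_⟩
    have hBz : (0:ℝ) ≤ ⟪B z, B z⟫ := real_inner_self_nonneg
    rw [hcapp z z, real_inner_self_eq_norm_mul_norm]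
    linarith
  set E := hcoer.continuousLinearEquivOfBilin with hE
  set z₀ : Z := E.symm (Bd w0) with hz₀
  -- optimality characterization
  have hopt₀ : ∀ y : Z, ρ * ⟪z₀, y⟫ + ⟪B z₀, B y⟫ = ⟪w0, B y⟫ := by
    intro y
    have h1 : ⟪E z₀, y⟫ = cF z₀ y := hcoer.continuousLinearEquivOfBilin_apply z₀ y
    have h2 : E z₀ = Bd w0 := E.apply_symm_apply _
    rw [h2] at h1
    rw [← hcapp z₀ y, ← h1, hBd, ContinuousLinearMap.adjoint_inner_left]
  have huniq : ∀ z : Z, (∀ y : Z, ρ * ⟪z, y⟫ + ⟪B z, B y⟫ = ⟪w0, B y⟫) → z = z₀ := by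
    intro z hz
    have h1 : Bd w0 = E z := by
      apply hcoer.unique_continuousLinearEquivOfBilin
      intro y
      rw [hBd, ContinuousLinearMap.adjoint_inner_left, ← hz y, hcapp]
    have h2 := congrArg E.symm h1
    rw [E.symm_apply_apply] at h2
    exact h2.symm

  -- adjoint setup for p₀
  set Sd : U →L[ℝ] L := ContinuousLinearMap.adjoint S with hSd
  set u₀ : U := G.symm (fstar + i z₀) with hu₀def
  set p₀ : U := G.symm (Sd (ContinuousLinearMap.adjoint F (wstar - F u₀))) with hp₀def
  have hGu₀ : G u₀ = fstar + i z₀ := G.apply_symm_apply _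
  have hSdKey : ∀ (t : L) (s : W),
      ⟪t, Sd (ContinuousLinearMap.adjoint F s)⟫ = ⟪F (G.symm t), s⟫ := by
    intro t s
    rw [hSd, ContinuousLinearMap.adjoint_inner_right, ContinuousLinearMap.adjoint_inner_right]
    rfl
  have hFsub : ∀ (a : U) (b : Z), G a = fstar + i b → F a = F (G.symm fstar) + B b := by
    intro a b hab
    have ha : a = G.symm (fstar + i b) := by rw [← hab, G.symm_apply_apply]
    rw [ha, map_add, map_add, hBapp]
  have hFu₀ : wstar - F u₀ = w0 - B z₀ := by
    rw [hFsub u₀ z₀ hGu₀, hw0]; abel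
  have hGp₀ : (G p₀ : L) = Sd (ContinuousLinearMap.adjoint F (wstar - F u₀)) :=
    G.apply_symm_apply _
  have hGvGp₀ : ∀ v : U, ⟪(G v : L), G p₀⟫ = ⟪F v, wstar - F u₀⟫ := by
    intro v
    rw [hGp₀, hSdKey, G.symm_apply_apply]
  have hiyGp₀ : ∀ y : Z, ⟪i y, (G p₀ : L)⟫ = ⟪B y, w0 - B z₀⟫ := by
    intro y
    rw [hGp₀, hSdKey, ← hBapp, hFu₀]
  -- analysis of the saddle-point system
  have hsys : ∀ (u : U) (z : Z) (p : U),
      (∀ (v : U) (y : Z),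
        ⟪F u, F v⟫ + ρ * ⟪z, y⟫ + ⟪G v, (G p : L)⟫ - ⟪i y, G p⟫ = ⟪F v, wstar⟫) →
      (∀ q : U, ⟪(G u : L), G q⟫ - ⟪i z, G q⟫ = ⟪fstar, G q⟫) →
      G u = fstar + i z ∧ (∀ y : Z, ρ * ⟪z, y⟫ + ⟪B z, B y⟫ = ⟪w0, B y⟫) ∧
      (∀ v : U, ⟪(G v : L), G p⟫ = ⟪F v, wstar⟫ - ⟪F u, F v⟫) := by
    intro u z p h1 h2
    have hcon : G u = fstar + i z := by
      have hz : ∀ q : U, ⟪(G u : L) - i z - fstar, (G q : L)⟫ = 0 := by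
        intro q
        rw [inner_sub_left, inner_sub_left]
        have := h2 q
        linarith
      have h0 : (G u : L) - i z - fstar = 0 := by
        have h0' := hz (G.symm ((G u : L) - i z - fstar))
        rw [G.apply_symm_apply] at h0'
        exact inner_self_eq_zero.mp h0'
      rw [sub_sub, sub_eq_zero] at h0
      rw [h0, add_comm]
    have hp1 : ∀ v : U, ⟪(G v : L), G p⟫ = ⟪F v, wstar⟫ - ⟪F u, F v⟫ := by
      intro v
      have h3 := h1 v 0
      simp only [map_zero, inner_zero_left, inner_zero_right, mul_zero, sub_zero,
        add_zero] at h3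
      linarith
    refine ⟨hcon, ?_, hp1⟩
    intro y
    have h4 : ρ * ⟪z, y⟫ = ⟪i y, (G p : L)⟫ := by
      have h3 := h1 0 y
      simp only [map_zero, inner_zero_left, inner_zero_right, zero_add, zero_sub,
        add_zero] at h3
      linarith
    have h5 := hp1 (G.symm (i y))
    rw [G.apply_symm_apply, ← hBapp] at h5
    rw [hFsub u z hcon, inner_add_left] at h5
    have hw0y : (⟪w0, B y⟫ : ℝ) = ⟪wstar, B y⟫ - ⟪F (G.symm fstar), B y⟫ := by
      rw [hw0, inner_sub_left]
    linarith [h4, h5, hw0y, real_inner_comm wstar (B y),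
      real_inner_comm (F (G.symm fstar)) (B y)]
  -- existence equations for (u₀, z₀, p₀)
  have heq1₀ : ∀ (v : U) (y : Z),
      ⟪F u₀, F v⟫ + ρ * ⟪z₀, y⟫ + ⟪(G v : L), G p₀⟫ - ⟪i y, G p₀⟫ = ⟪F v, wstar⟫ := by
    intro v y
    rw [hGvGp₀ v, hiyGp₀ y]
    have e1 : (⟪F v, wstar - F u₀⟫ : ℝ) = ⟪F v, wstar⟫ - ⟪F v, F u₀⟫ := by
      rw [inner_sub_right]
    have e2 : (⟪B y, w0 - B z₀⟫ : ℝ) = ⟪B y, w0⟫ - ⟪B y, B z₀⟫ := by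
      rw [inner_sub_right]
    linarith [hopt₀ y, e1, e2, real_inner_comm (F u₀) (F v), real_inner_comm w0 (B y),
      real_inner_comm (B z₀) (B y)]
  have heq2₀ : ∀ q : U, ⟪(G u₀ : L), G q⟫ - ⟪i z₀, G q⟫ = ⟪fstar, G q⟫ := by
    intro q
    rw [hGu₀, inner_add_left]
    ring

  refine ⟨ha1, fun u v => real_inner_comm _ _, ha3, hb1, hd1,
    fun u v => real_inner_comm _ _, fun u => real_inner_self_nonneg,
    he1, fun z y => by rw [real_inner_comm],
    fun z => by rw [real_inner_self_eq_norm_sq], ?_, ?_⟩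
  · -- unique solvability
    refine ⟨(u₀, z₀, p₀), ⟨heq1₀, heq2₀⟩, ?_⟩
    rintro ⟨u, z, p⟩ ⟨h1, h2⟩
    dsimp only at h1 h2
    obtain ⟨hcon, hopt, hp1⟩ := hsys u z p h1 h2
    have hz : z = z₀ := huniq z hopt
    have hu : u = u₀ := by
      apply G.injective
      rw [hcon, hz, hGu₀]
    have hp : p = p₀ := by
      apply G.injective
      have hdiff : ∀ v : U, ⟪(G v : L), (G p : L) - G p₀⟫ = 0 := by
        intro v
        have e1 : (⟪F v, wstar - F u₀⟫ : ℝ) = ⟪F v, wstar⟫ - ⟪F v, F u₀⟫ := by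
          rw [inner_sub_right]
        rw [inner_sub_right, hp1 v, hGvGp₀ v, hu]
        linarith [e1, real_inner_comm (F u₀) (F v)]
      have h6 := hdiff (p - p₀)
      rw [map_sub] at h6
      exact sub_eq_zero.mp (inner_self_eq_zero.mp h6)
    rw [Prod.mk.injEq, Prod.mk.injEq]
    exact ⟨hu, hz, hp⟩
  · -- minimization
    rintro ⟨u, z, p⟩ ⟨h1, h2⟩
    dsimp only at h1 h2 ⊢
    obtain ⟨hcon, hopt, -⟩ := hsys u z p h1 h2
    refine ⟨hcon, ?_⟩
    intro u' z' hcon'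
    have hFw : F u - wstar = B z - w0 := by
      rw [hFsub u z hcon, hw0]; abel
    have hFw' : F u' - wstar = B z' - w0 := by
      rw [hFsub u' z' hcon', hw0]; abel
    set δ : Z := z' - z with hδ
    have hz' : z' = z + δ := by rw [hδ]; abel
    have hBz' : B z' - w0 = (B z - w0) + B δ := by rw [hz', map_add]; abel
    have hnorm1 : ‖B z' - w0‖ ^ 2 = ‖B z - w0‖ ^ 2 + 2 * ⟪B z - w0, B δ⟫ + ‖B δ‖ ^ 2 := by
      rw [hBz']; exact norm_add_sq_real _ _
    have hnorm2 : ‖z'‖ ^ 2 = ‖z‖ ^ 2 + 2 * ⟪z, δ⟫ + ‖δ‖ ^ 2 := by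
      rw [hz']; exact norm_add_sq_real _ _
    have hcross : ⟪B z - w0, B δ⟫ + ρ * ⟪z, δ⟫ = 0 := by
      have h7 := hopt δ
      rw [inner_sub_left]
      linarith
    have hnn1 : (0:ℝ) ≤ ‖B δ‖ ^ 2 := sq_nonneg _
    have hnn2 : (0:ℝ) ≤ ‖δ‖ ^ 2 := sq_nonneg _
    have hnn3 : (0:ℝ) ≤ ρ * ‖δ‖ ^ 2 := mul_nonneg hρ.le hnn2
    constructor
    · rw [hFw, hFw', hnorm1, hnorm2]
      linarith [hcross, hnn1, hnn3]
    · intro heq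
      rw [hFw, hFw', hnorm1, hnorm2] at heq
      have h7 : ρ * ‖δ‖ ^ 2 ≤ ρ * 0 := by linarith [hcross, hnn1]
      have h8 : ‖δ‖ ^ 2 = 0 := le_antisymm (by linarith [(mul_le_mul_iff_right₀ hρ).mp h7]) hnn2
      have hδ0 : δ = 0 := norm_eq_zero.mp (sq_eq_zero_iff.mp h8)
      have hzz : z' = z := by rw [hz', hδ0, add_zero]
      refine ⟨?_, hzz⟩
      apply G.injective
      rw [hcon', hzz, hcon]
end

section
/- Let U, L, W, Z be Hilbert spaces with i: Z → L bounded linear. Let G ∈ L(U,L) be an isomorphism, F ∈ L(U,W), ρ>0, and consider the a posteriori error identity: for the exact saddle-point solution (u,z,p) and any approximation (u^δ,z^δ,p^δ) ∈ U×Z×U, the squared error ‖u−u^δ‖²_U + ‖z−z^δ‖²_Z + ‖p−p^δ‖²_U is equivalent (with constants depending only on the stability constants) to R₁² + R₂² + R₃², where R₁ := sup_{0≠v∈U} (⟨Fv, w*−Fu^δ⟩_W − ⟨Gv, Gp^δ⟩_L)/‖v‖_U, R₂ := ‖f* + z^δ − Gu^δ‖_L, and R₃ := ‖Π G p^δ −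 ρ C z^δ‖_{Z'}. -/
open RealInnerProductSpace

private lemma stmt14_sq_le (x c s : ℝ) (hx : 0 ≤ x) (h : x ≤ c*s) : x^2 ≤ c^2*s^2 := by
  have h2 := mul_self_le_mul_self hx h
  calc x^2 = x*x := sq x
    _ ≤ (c*s)*(c*s) := h2
    _ = c^2*s^2 := by ring

private lemma stmt14_three_sq (a b c : ℝ) : (a+b+c)^2 ≤ 3*(a^2+b^2+c^2) := by
  nlinarith [sq_nonneg (a-b), sq_nonneg (a-c), sq_nonneg (b-c)]

private lemma stmt14_easy_aux (a₁ b₁ a₂ b₂ a₃ b₃ A E P r₁ r₂ r₃ : ℝ)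
    (hr₁ : 0 ≤ r₁) (hr₂ : 0 ≤ r₂) (hr₃ : 0 ≤ r₃)
    (h1 : r₁ ≤ a₁*A + b₁*P) (h2 : r₂ ≤ a₂*A + b₂*E) (h3 : r₃ ≤ a₃*E + b₃*P) :
    r₁^2 + r₂^2 + r₃^2
      ≤ (2*(a₁^2+b₁^2+a₂^2+b₂^2+a₃^2+b₃^2)+1)*(A^2+E^2+P^2) := by
  nlinarith [mul_self_le_mul_self hr₁ h1, mul_self_le_mul_self hr₂ h2,
    mul_self_le_mul_self hr₃ h3,
    sq_nonneg (a₁*A - b₁*P), sq_nonneg (a₂*A - b₂*E), sq_nonneg (a₃*E - b₃*P),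
    mul_nonneg (sq_nonneg a₁) (sq_nonneg E), mul_nonneg (sq_nonneg a₁) (sq_nonneg P),
    mul_nonneg (sq_nonneg b₁) (sq_nonneg A), mul_nonneg (sq_nonneg b₁) (sq_nonneg E),
    mul_nonneg (sq_nonneg a₂) (sq_nonneg E), mul_nonneg (sq_nonneg a₂) (sq_nonneg P),
    mul_nonneg (sq_nonneg b₂) (sq_nonneg A), mul_nonneg (sq_nonneg b₂) (sq_nonneg P),
    mul_nonneg (sq_nonneg a₃) (sq_nonneg A), mul_nonneg (sq_nonneg a₃) (sq_nonneg P),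
    mul_nonneg (sq_nonneg b₃) (sq_nonneg A), mul_nonneg (sq_nonneg b₃) (sq_nonneg E),
    sq_nonneg A, sq_nonneg E, sq_nonneg P, sq_nonneg r₁, sq_nonneg r₂, sq_nonneg r₃]

set_option maxHeartbeats 1000000 in
private lemma stmt14_hard_aux (ρ γ κ φ : ℝ) (hρ : 0 < ρ) (hγ : 0 ≤ γ) (hκ : 0 ≤ κ) (hφ : 0 ≤ φ) :
    ∃ c > 0, ∀ A B E P r₁ r₂ r₃ : ℝ,
      0 ≤ A → 0 ≤ B → 0 ≤ E → 0 ≤ P → 0 ≤ r₁ → 0 ≤ r₂ → 0 ≤ r₃ →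
      A ≤ γ*(r₂ + κ*E) → B^2 ≤ (r₁ + φ^2*A)*P → P ≤ γ*B →
      ρ*E^2 ≤ r₁*A + r₂*B + r₃*E →
      A^2 + E^2 + P^2 ≤ c*(r₁^2+r₂^2+r₃^2) := by
  obtain ⟨M, hM⟩ : ∃ M : ℝ, M = 2*γ + φ^2*γ^2 + γ*κ + φ^2*γ^2*κ + 1 := ⟨_, rfl⟩
  have hM1 : 1 ≤ M := by
    rw [hM]
    nlinarith [mul_nonneg (mul_nonneg (sq_nonneg φ) (sq_nonneg γ)) hκ, mul_nonneg hγ hκ,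
      mul_nonneg (sq_nonneg φ) (sq_nonneg γ), hγ]
  have hM0 : 0 < M := by linarith
  obtain ⟨K, hK⟩ : ∃ K : ℝ, K = M / ρ := ⟨_, rfl⟩
  have hK0 : 0 < K := hK ▸ div_pos hM0 hρ
  obtain ⟨cE, hcE⟩ : ∃ cE : ℝ, cE = 1 + 2*K := ⟨_, rfl⟩
  obtain ⟨cA, hcA⟩ : ∃ cA : ℝ, cA = γ + γ*κ*cE := ⟨_, rfl⟩
  obtain ⟨cB, hcB⟩ : ∃ cB : ℝ, cB = γ + φ^2*γ^2 + φ^2*γ^2*κ*cE := ⟨_, rfl⟩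
  have hcE0 : 0 ≤ cE := by rw [hcE]; positivity
  have hcA0 : 0 ≤ cA := by rw [hcA]; positivity
  have hcB0 : 0 ≤ cB := by rw [hcB]; positivity
  obtain ⟨D, hD⟩ : ∃ D : ℝ, D = cA^2 + cE^2 + (γ*cB)^2 := ⟨_, rfl⟩
  have hD0 : 0 ≤ D := by rw [hD]; positivity
  refine ⟨3*D + 1, by rw [hD]; positivity, ?_⟩
  intro A B E P r₁ r₂ r₃ hA0 hB0 hE0 hP0 hr₁0 hr₂0 hr₃0 hA hB hP hstar
  obtain ⟨S, hS⟩ : ∃ S : ℝ, S = r₁ + r₂ + r₃ := ⟨_, rfl⟩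
  have hS0 : 0 ≤ S := by rw [hS]; positivity
  have hr₁S : r₁ ≤ S := by rw [hS]; linarith
  have hr₂S : r₂ ≤ S := by rw [hS]; linarith
  have hr₃S : r₃ ≤ S := by rw [hS]; linarith
  have hB' : B ≤ γ*(r₁ + φ^2*A) := by
    rcases eq_or_lt_of_le hB0 with h | h
    · rw [← h]; positivity
    · have hc : 0 ≤ r₁ + φ^2*A := by positivity
      have h1 : (r₁ + φ^2*A)*P ≤ (r₁ + φ^2*A)*(γ*B) := mul_le_mul_of_nonneg_left hP hc
      have h2 : B*B ≤ (γ*(r₁ + φ^2*A))*B := by linarith [hB, h1, sq_abs B]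
      exact le_of_mul_le_mul_right h2 h
  have hA' : A ≤ γ*S + γ*κ*E := by
    have t := mul_le_mul_of_nonneg_left hr₂S hγ
    linarith [hA, t]
  have hB'' : B ≤ (γ + φ^2*γ^2)*S + φ^2*γ^2*κ*E := by
    have h : φ^2*A ≤ φ^2*(γ*S + γ*κ*E) := mul_le_mul_of_nonneg_left hA' (sq_nonneg φ)
    have t : γ*(r₁ + φ^2*A) ≤ γ*(r₁ + φ^2*(γ*S + γ*κ*E)) :=
      mul_le_mul_of_nonneg_left (by linarith) hγ
    have t2 : γ*r₁ ≤ γ*S := mul_le_mul_of_nonneg_left hr₁S hγ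
    linarith [hB', t, t2]
  have key : ρ*E^2 ≤ M*S^2 + M*(S*E) := by
    have t1 : r₁*A ≤ S*(γ*S + γ*κ*E) := mul_le_mul hr₁S hA' hA0 hS0
    have t2 : r₂*B ≤ S*((γ + φ^2*γ^2)*S + φ^2*γ^2*κ*E) := mul_le_mul hr₂S hB'' hB0 hS0
    have t3 : r₃*E ≤ S*E := mul_le_mul_of_nonneg_right hr₃S hE0
    have n1 : 0 ≤ (γ*κ + φ^2*γ^2*κ)*S^2 := by positivity
    have n2 : 0 ≤ (2*γ + φ^2*γ^2)*(S*E) :=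
      mul_nonneg (by positivity) (mul_nonneg hS0 hE0)
    rw [hM]
    linarith [hstar, t1, t2, t3, n1, n2, sq_nonneg S]
  have hES : E ≤ cE * S := by
    rcases le_or_gt E S with h | h
    · rw [hcE]
      have := mul_nonneg hK0.le hS0
      linarith
    · have hEpos : 0 < E := lt_of_le_of_lt hS0 h
      have h2 : S^2 ≤ S*E := by
        have := mul_le_mul_of_nonneg_left h.le hS0
        linarith [this, sq_abs S]
      have h3 : ρ*E*E ≤ 2*M*S*E := by
        have := mul_le_mul_of_nonneg_left h2 hM0.le
        linarith [key, this, sq_abs E]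
      have h4 : ρ*E ≤ 2*M*S := le_of_mul_le_mul_right h3 hEpos
      have hKM : ρ*K = M := by rw [hK]; field_simp
      have h5 : ρ*E ≤ ρ*(cE*S) := by
        have he : ρ*(cE*S) = ρ*S + 2*(ρ*K)*S := by rw [hcE]; ring
        have hρS : 0 ≤ ρ*S := mul_nonneg hρ.le hS0
        rw [he, hKM]; linarith
      exact le_of_mul_le_mul_left h5 hρ
  have hAS : A ≤ cA * S := by
    have t := mul_le_mul_of_nonneg_left hES (mul_nonneg hγ hκ)
    rw [hcA]; linarith [hA', t]
  have hBS : B ≤ cB * S := by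
    have t := mul_le_mul_of_nonneg_left hES (by positivity : (0:ℝ) ≤ φ^2*γ^2*κ)
    rw [hcB]; linarith [hB'', t]
  have hPS : P ≤ γ*cB*S := by
    have t := mul_le_mul_of_nonneg_left hBS hγ
    linarith [hP, t]
  have sq1 : A^2 ≤ cA^2*S^2 := stmt14_sq_le A cA S hA0 hAS
  have sq2 : E^2 ≤ cE^2*S^2 := stmt14_sq_le E cE S hE0 hES
  have sq3 : P^2 ≤ (γ*cB)^2*S^2 := stmt14_sq_le P (γ*cB) S hP0 (by linarith [hPS])
  have hS3 : S^2 ≤ 3*(r₁^2+r₂^2+r₃^2) := by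
    rw [hS]; exact stmt14_three_sq r₁ r₂ r₃
  have hX0 : 0 ≤ r₁^2+r₂^2+r₃^2 := by positivity
  have h6 : D*S^2 ≤ D*(3*(r₁^2+r₂^2+r₃^2)) := mul_le_mul_of_nonneg_left hS3 hD0
  rw [hD] at h6 ⊢
  linarith [h6, sq1, sq2, sq3, hX0]

set_option maxHeartbeats 1000000

/-- a posteriori error equivalence for the optimal-control saddle-point
problem: the squared error of any approximation (u^δ,z^δ,p^δ) is equivalent to
R₁²+R₂²+R₃², where (by Riesz representation) R₁ = ‖F*(w*−Fu^δ) − G*Gp^δ‖_U is the dual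
norm of v ↦ ⟨Fv,w*−Fu^δ⟩−⟨Gv,Gp^δ⟩, R₂ = ‖f*+z^δ−Gu^δ‖_L, and R₃ the Z'-norm of
ΠGp^δ−ρCz^δ, i.e. the norm of the functional y ↦ ⟨Gp^δ−ρCz^δ, iy⟩ on Z (the projection
Π may be dropped in the pairing against iy ∈ L̂). -/
theorem stmt14
    {U L W Z : Type*}
    [NormedAddCommGroup U] [InnerProductSpace ℝ U] [CompleteSpace U]
    [NormedAddCommGroup L] [InnerProductSpace ℝ L] [CompleteSpace L]
    [NormedAddCommGroup W] [InnerProductSpace ℝ W] [CompleteSpace W]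
    [NormedAddCommGroup Z] [InnerProductSpace ℝ Z] [CompleteSpace Z]
    (i : Z →L[ℝ] L) (hi : Function.Injective i)
    (G : U ≃L[ℝ] L) (F : U →L[ℝ] W) (fstar : L) (wstar : W)
    (ρ : ℝ) (hρ : 0 < ρ)
    (C : Z →L[ℝ] L) (hC : ∀ z y : Z, ⟪z, y⟫ = ⟪C z, i y⟫)
    -- exact saddle-point solution
    (u : U) (z : Z) (p : U)
    (h1 : ∀ (v : U) (y : Z),
      ⟪F u, F v⟫ + ρ * ⟪z, y⟫ + ⟪G v, G p⟫ - ⟪i y, G p⟫ = ⟪F v, wstar⟫)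
    (h2 : ∀ q : U, ⟪G u, G q⟫ - ⟪i z, G q⟫ = ⟪fstar, G q⟫) :
    ∃ c₁ > 0, ∃ c₂ > 0, ∀ (uδ : U) (zδ : Z) (pδ : U),
      c₁ * (‖ContinuousLinearMap.adjoint F (wstar - F uδ)
              - ContinuousLinearMap.adjoint (G : U →L[ℝ] L) (G pδ)‖ ^ 2
            + ‖fstar + i zδ - G uδ‖ ^ 2
            + ‖(innerSL ℝ (G pδ - ρ • C zδ)).comp i‖ ^ 2)
        ≤ ‖u - uδ‖ ^ 2 + ‖z - zδ‖ ^ 2 + ‖p - pδ‖ ^ 2 ∧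
      ‖u - uδ‖ ^ 2 + ‖z - zδ‖ ^ 2 + ‖p - pδ‖ ^ 2
        ≤ c₂ * (‖ContinuousLinearMap.adjoint F (wstar - F uδ)
              - ContinuousLinearMap.adjoint (G : U →L[ℝ] L) (G pδ)‖ ^ 2
            + ‖fstar + i zδ - G uδ‖ ^ 2
            + ‖(innerSL ℝ (G pδ - ρ • C zδ)).comp i‖ ^ 2) := by
  -- abbreviations for the operator norms
  obtain ⟨γ, hγdef⟩ : ∃ γ : ℝ, γ = ‖(G.symm : L →L[ℝ] U)‖ := ⟨_, rfl⟩
  obtain ⟨κ, hκdef⟩ : ∃ κ : ℝ, κ = ‖i‖ := ⟨_, rfl⟩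
  obtain ⟨φ, hφdef⟩ : ∃ φ : ℝ, φ = ‖F‖ := ⟨_, rfl⟩
  obtain ⟨g, hgdef⟩ : ∃ g : ℝ, g = ‖(G : U →L[ℝ] L)‖ := ⟨_, rfl⟩
  obtain ⟨ψ, hψdef⟩ : ∃ ψ : ℝ, ψ = ‖ContinuousLinearMap.adjoint F‖ := ⟨_, rfl⟩
  obtain ⟨g₂, hg₂def⟩ : ∃ g₂ : ℝ, g₂ = ‖ContinuousLinearMap.adjoint (G : U →L[ℝ] L)‖ := ⟨_, rfl⟩
  have hγ0 : 0 ≤ γ := hγdef ▸ norm_nonneg _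
  have hκ0 : 0 ≤ κ := hκdef ▸ norm_nonneg _
  have hφ0 : 0 ≤ φ := hφdef ▸ norm_nonneg _
  have hg0 : 0 ≤ g := hgdef ▸ norm_nonneg _
  have hψ0 : 0 ≤ ψ := hψdef ▸ norm_nonneg _
  have hg₂0 : 0 ≤ g₂ := hg₂def ▸ norm_nonneg _
  -- structural identities for the exact solution
  have hfstar : fstar = G u - i z := by
    have hw : ∀ q : U, ⟪G u - i z - fstar, (G : U →L[ℝ] L) q⟫ = 0 := by
      intro q
      have := h2 q
      simp only [inner_sub_left, ContinuousLinearEquiv.coe_coe]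
      linarith
    have h0 : G u - i z - fstar = 0 := by
      have := hw (G.symm (G u - i z - fstar))
      rw [ContinuousLinearEquiv.coe_coe, G.apply_symm_apply] at this
      exact inner_self_eq_zero.mp this
    exact (sub_eq_zero.mp h0).symm
  have hA1 : ∀ v : U, ⟪F v, wstar⟫ = ⟪F u, F v⟫ + ⟪G v, G p⟫ := by
    intro v
    have := h1 v 0
    simp only [inner_zero_right, map_zero, inner_zero_left, mul_zero] at this
    linarith
  have hA2 : ∀ y : Z, ρ * ⟪z, y⟫ = ⟪i y, G p⟫ := by
    intro y
    have := h1 0 y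
    simp only [map_zero, inner_zero_right, inner_zero_left] at this
    linarith
  have hFadj : ContinuousLinearMap.adjoint F wstar
      = ContinuousLinearMap.adjoint F (F u)
        + ContinuousLinearMap.adjoint (G : U →L[ℝ] L) (G p) := by
    apply ext_inner_left ℝ
    intro v
    rw [inner_add_right, ContinuousLinearMap.adjoint_inner_right,
      ContinuousLinearMap.adjoint_inner_right, ContinuousLinearMap.adjoint_inner_right]
    simp only [ContinuousLinearEquiv.coe_coe]
    rw [hA1 v, real_inner_comm (F u) (F v)]
  -- the two constants
  obtain ⟨c₂, hc₂0, hc₂⟩ := stmt14_hard_aux ρ γ κ φ hρ hγ0 hκ0 hφ0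
  obtain ⟨Cb, hCbdef⟩ :
      ∃ Cb : ℝ, Cb = 2*((ψ*φ)^2+(g₂*g)^2+g^2+κ^2+ρ^2+(κ*g)^2)+1 := ⟨_, rfl⟩
  have hCb0 : 0 < Cb := by rw [hCbdef]; positivity
  refine ⟨Cb⁻¹, by positivity, c₂, hc₂0, ?_⟩
  intro uδ zδ pδ
  -- residuals and errors
  obtain ⟨R₁, hR₁def⟩ : ∃ R₁ : U, R₁ = ContinuousLinearMap.adjoint F (wstar - F uδ)
      - ContinuousLinearMap.adjoint (G : U →L[ℝ] L) (G pδ) := ⟨_, rfl⟩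
  obtain ⟨R₂, hR₂def⟩ : ∃ R₂ : L, R₂ = fstar + i zδ - G uδ := ⟨_, rfl⟩
  obtain ⟨R₃, hR₃def⟩ : ∃ R₃ : Z →L[ℝ] ℝ,
      R₃ = (innerSL ℝ (G pδ - ρ • C zδ)).comp i := ⟨_, rfl⟩
  obtain ⟨eu, heudef⟩ : ∃ eu : U, eu = u - uδ := ⟨_, rfl⟩
  obtain ⟨ez, hezdef⟩ : ∃ ez : Z, ez = z - zδ := ⟨_, rfl⟩
  obtain ⟨ep, hepdef⟩ : ∃ ep : U, ep = p - pδ := ⟨_, rfl⟩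
  -- residual identities
  have hGeu : G eu = R₂ + i ez := by
    rw [heudef, hezdef, hR₂def, hfstar, map_sub G, map_sub i]
    abel
  have hR1 : R₁ = ContinuousLinearMap.adjoint F (F eu)
      + ContinuousLinearMap.adjoint (G : U →L[ℝ] L) (G ep) := by
    rw [hR₁def, heudef, hepdef, map_sub (ContinuousLinearMap.adjoint F), hFadj,
      map_sub F, map_sub G, map_sub (ContinuousLinearMap.adjoint F),
      map_sub (ContinuousLinearMap.adjoint (G : U →L[ℝ] L))]
    abel
  have hc1 : ∀ v : U, ⟪R₁, v⟫ = ⟪F eu, F v⟫ + ⟪G ep, G v⟫ := by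
    intro v
    rw [hR1, inner_add_left, ContinuousLinearMap.adjoint_inner_left,
      ContinuousLinearMap.adjoint_inner_left]
    simp only [ContinuousLinearEquiv.coe_coe]
  have hR3 : ∀ y : Z, R₃ y = ρ * ⟪ez, y⟫ - ⟪G ep, i y⟫ := by
    intro y
    rw [hR₃def]
    simp only [ContinuousLinearMap.coe_comp', Function.comp_apply, innerSL_apply_apply]
    rw [inner_sub_left, real_inner_smul_left, hezdef, hepdef, map_sub G,
      inner_sub_left, inner_sub_left]
    have e1 := hA2 y
    have e2 : ρ * ⟪zδ, y⟫ = ρ * ⟪C zδ, i y⟫ := by rw [hC zδ y]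
    have e3 := real_inner_comm (i y) (G p)
    linarith [e1, e2, e3]
  -- the energy identity
  have hR2Gep : ⟪R₂, G ep⟫ = ⟪G eu, G ep⟫ - ⟪i ez, G ep⟫ := by
    have hR2' : R₂ = G eu - i ez := by rw [hGeu]; abel
    rw [hR2', inner_sub_left]
  have hR3ez : R₃ ez = ρ * ‖ez‖^2 - ⟪G ep, i ez⟫ := by
    rw [hR3 ez, real_inner_self_eq_norm_sq]
  have key : ρ * ‖ez‖^2 + ‖F eu‖^2 = ⟪R₁, eu⟫ - ⟪R₂, G ep⟫ + R₃ ez := by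
    have c1 := hc1 eu
    linarith [c1, hR2Gep, hR3ez, real_inner_comm (G ep) (G eu),
      real_inner_comm (i ez) (G ep), real_inner_self_eq_norm_sq (F eu)]
  -- the four inequalities feeding the hard direction
  have hstar : ρ * ‖ez‖^2 ≤ ‖R₁‖*‖eu‖ + ‖R₂‖*‖G ep‖ + ‖R₃‖*‖ez‖ := by
    have b1 := real_inner_le_norm R₁ eu
    have b2 : -⟪R₂, G ep⟫ ≤ ‖R₂‖*‖G ep‖ := by
      have := abs_real_inner_le_norm R₂ (G ep)
      have := neg_abs_le ⟪R₂, G ep⟫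
      linarith
    have b3 : R₃ ez ≤ ‖R₃‖*‖ez‖ := by
      have h := R₃.le_opNorm ez
      rw [Real.norm_eq_abs] at h
      linarith [le_abs_self (R₃ ez)]
    linarith [key, sq_nonneg ‖F eu‖, b1, b2, b3]
  have hsymm : ∀ x : L, ‖G.symm x‖ ≤ γ * ‖x‖ := by
    intro x
    rw [hγdef]
    exact (G.symm : L →L[ℝ] U).le_opNorm x
  have hAbd : ‖eu‖ ≤ γ*(‖R₂‖ + κ*‖ez‖) := by
    have h0 : eu = G.symm (G eu) := (G.symm_apply_apply eu).symm
    have h1 : ‖eu‖ ≤ γ * ‖G eu‖ := by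
      have := hsymm (G eu)
      rwa [G.symm_apply_apply] at this
    have h2 : ‖G eu‖ ≤ ‖R₂‖ + κ*‖ez‖ := by
      rw [hGeu]
      refine (norm_add_le _ _).trans ?_
      have : ‖i ez‖ ≤ κ * ‖ez‖ := hκdef ▸ i.le_opNorm ez
      linarith
    calc ‖eu‖ ≤ γ * ‖G eu‖ := h1
      _ ≤ γ*(‖R₂‖ + κ*‖ez‖) := mul_le_mul_of_nonneg_left h2 hγ0
  have hBbd : ‖G ep‖^2 ≤ (‖R₁‖ + φ^2*‖eu‖)*‖ep‖ := by
    have c1 := hc1 ep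
    have t1 : -(‖F eu‖*‖F ep‖) ≤ ⟪F eu, F ep⟫ := by
      have := abs_real_inner_le_norm (F eu) (F ep)
      have := neg_abs_le ⟪F eu, F ep⟫
      linarith
    have t2 : ‖F eu‖*‖F ep‖ ≤ (φ*‖eu‖)*(φ*‖ep‖) := by
      refine mul_le_mul (hφdef ▸ F.le_opNorm eu) (hφdef ▸ F.le_opNorm ep)
        (norm_nonneg _) (by positivity)
    have t3 := real_inner_le_norm R₁ ep
    have t4 := real_inner_self_eq_norm_sq (G ep)
    nlinarith [c1, t1, t2, t3, t4]
  have hPbd : ‖ep‖ ≤ γ*‖G ep‖ := by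
    have := hsymm (G ep)
    rwa [G.symm_apply_apply] at this
  -- the three inequalities feeding the easy direction
  have he1 : ‖R₁‖ ≤ (ψ*φ)*‖eu‖ + (g₂*g)*‖ep‖ := by
    rw [hR1]
    refine (norm_add_le _ _).trans ?_
    have t1 : ‖ContinuousLinearMap.adjoint F (F eu)‖ ≤ ψ*(φ*‖eu‖) := by
      refine ((ContinuousLinearMap.adjoint F).le_opNorm (F eu)).trans ?_
      rw [hψdef, hφdef]
      exact mul_le_mul_of_nonneg_left (F.le_opNorm eu) (norm_nonneg _)
    have t2 : ‖ContinuousLinearMap.adjoint (G : U →L[ℝ] L) (G ep)‖ ≤ g₂*(g*‖ep‖) := by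
      refine ((ContinuousLinearMap.adjoint (G : U →L[ℝ] L)).le_opNorm (G ep)).trans ?_
      rw [hg₂def, hgdef]
      refine mul_le_mul_of_nonneg_left ?_ (norm_nonneg _)
      exact (G : U →L[ℝ] L).le_opNorm ep
    linarith [t1, t2]
  have he2 : ‖R₂‖ ≤ g*‖eu‖ + κ*‖ez‖ := by
    have hR2' : R₂ = G eu - i ez := by rw [hGeu]; abel
    rw [hR2']
    refine (norm_sub_le _ _).trans ?_
    have t1 : ‖G eu‖ ≤ g*‖eu‖ := hgdef ▸ (G : U →L[ℝ] L).le_opNorm eu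
    have t2 : ‖i ez‖ ≤ κ*‖ez‖ := hκdef ▸ i.le_opNorm ez
    linarith
  have he3 : ‖R₃‖ ≤ ρ*‖ez‖ + (κ*g)*‖ep‖ := by
    rw [hR₃def] at *
    refine ContinuousLinearMap.opNorm_le_bound _ (by positivity) (fun y => ?_)
    rw [← hR₃def, Real.norm_eq_abs, hR3 y]
    have d1 : |ρ*⟪ez, y⟫| ≤ ρ*(‖ez‖*‖y‖) := by
      rw [abs_mul, abs_of_pos hρ]
      exact mul_le_mul_of_nonneg_left (abs_real_inner_le_norm ez y) hρ.le
    have d2 : |⟪G ep, i y⟫| ≤ (g*‖ep‖)*(κ*‖y‖) := by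
      refine (abs_real_inner_le_norm _ _).trans ?_
      refine mul_le_mul (hgdef ▸ (G : U →L[ℝ] L).le_opNorm ep)
        (hκdef ▸ i.le_opNorm y) (norm_nonneg _) (by positivity)
    have d3 := abs_sub (ρ*⟪ez, y⟫) ⟪G ep, i y⟫
    nlinarith [d1, d2, d3]
  -- conclude
  have hnormsgoal :
      ‖u - uδ‖ ^ 2 + ‖z - zδ‖ ^ 2 + ‖p - pδ‖ ^ 2 = ‖eu‖^2 + ‖ez‖^2 + ‖ep‖^2 := by
    rw [heudef, hezdef, hepdef]
  have hResGoal :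
      ‖ContinuousLinearMap.adjoint F (wstar - F uδ)
          - ContinuousLinearMap.adjoint (G : U →L[ℝ] L) (G pδ)‖ ^ 2
        + ‖fstar + i zδ - G uδ‖ ^ 2
        + ‖(innerSL ℝ (G pδ - ρ • C zδ)).comp i‖ ^ 2
      = ‖R₁‖^2 + ‖R₂‖^2 + ‖R₃‖^2 := by
    rw [hR₁def, hR₂def, hR₃def]
  rw [hnormsgoal, hResGoal]
  constructor
  · -- easy direction
    have heasy := stmt14_easy_aux (ψ*φ) (g₂*g) g κ ρ (κ*g) ‖eu‖ ‖ez‖ ‖ep‖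
      ‖R₁‖ ‖R₂‖ ‖R₃‖ (norm_nonneg _) (norm_nonneg _) (norm_nonneg _) he1 he2 he3
    rw [← hCbdef] at heasy
    calc Cb⁻¹ * (‖R₁‖^2 + ‖R₂‖^2 + ‖R₃‖^2)
        ≤ Cb⁻¹ * (Cb * (‖eu‖^2 + ‖ez‖^2 + ‖ep‖^2)) :=
          mul_le_mul_of_nonneg_left heasy (by positivity)
      _ = ‖eu‖^2 + ‖ez‖^2 + ‖ep‖^2 := inv_mul_cancel_left₀ (ne_of_gt hCb0) _
  · -- hard direction
    exact hc₂ ‖eu‖ ‖G ep‖ ‖ez‖ ‖ep‖ ‖R₁‖ ‖R₂‖ ‖R₃‖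
      (norm_nonneg _) (norm_nonneg _) (norm_nonneg _) (norm_nonneg _)
      (norm_nonneg _) (norm_nonneg _) (norm_nonneg _)
      hAbd hBbd hPbd hstar
end
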